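/- Let X = sin(2πfU + φ₁) and Y = sin(2πfU + φ₂) where U is uniform on {0,…,n−1} and f = 1/n with n ≥ 3. If φ₁ − φ₂ is not congruent to π/2 modulo π, then X and Y are not independent (indeed they are correlated). -/

import Mathlib

open MeasureTheory Real ProbabilityTheory

private lemma sum_exp_aux (n m : ℕ) (hm1 : 0 < m) (hmn : m < n) (θ : ℝ) :
    ∑ u ∈ Finset.range n, Complex.exp (((2 * π * (m / n) * u + θ : ℝ)) * Complex.I) = 0 := by
  have hn : 0 < n := lt_trans hm1 hmn
  have hn' : (n : ℝ) ≠ 0 := Nat.cast_ne_zero.mpr hn.ne'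
  set z : ℂ := Complex.exp (((2 * π * (m / n) : ℝ)) * Complex.I) with hz
  have hz1 : z ≠ 1 := by
    intro h
    rw [hz, Complex.exp_eq_one_iff] at h
    obtain ⟨k, hk⟩ := h
    have him := congrArg Complex.im hk
    simp [Complex.mul_I_im] at him
    -- him : 2 * π * (m / n) = k * (2 * π)
    have hπ : (0:ℝ) < π := Real.pi_pos
    have hmn' : (m : ℝ) / n = k := by
      field_simp at him ⊢
      nlinarith [him]
    have h0 : (0 : ℝ) < (m : ℝ) / n := by positivity
    have h1 : (m : ℝ) / n < 1 := by
      rw [div_lt_one (by positivity)]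
      exact_mod_cast hmn
    rw [hmn'] at h0 h1
    have : (0 : ℤ) < k := by exact_mod_cast h0
    have : (k : ℤ) < 1 := by exact_mod_cast h1
    omega
  have hzn : z ^ n = 1 := by
    rw [hz, ← Complex.exp_nat_mul]
    have : (n : ℂ) * (((2 * π * (m / n) : ℝ)) * Complex.I) = (m : ℂ) * (2 * π * Complex.I) := by
      have hnC : (n : ℂ) ≠ 0 := by exact_mod_cast hn'
      push_cast
      field_simp
    rw [this]
    exact_mod_cast Complex.exp_int_mul_two_pi_mul_I (m : ℤ)
  have hterm : ∀ u ∈ Finset.range n,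
      Complex.exp (((2 * π * (m / n) * u + θ : ℝ)) * Complex.I)
        = Complex.exp ((θ : ℝ) * Complex.I) * z ^ u := by
    intro u _
    rw [hz, ← Complex.exp_nat_mul, ← Complex.exp_add]
    congr 1
    push_cast
    ring
  rw [Finset.sum_congr rfl hterm, ← Finset.mul_sum, geom_sum_eq hz1, hzn]
  simp

private lemma sum_cos_aux (n m : ℕ) (hm1 : 0 < m) (hmn : m < n) (θ : ℝ) :
    ∑ u ∈ Finset.range n, Real.cos (2 * π * (m / n) * u + θ) = 0 := by
  have h := congrArg Complex.re (sum_exp_aux n m hm1 hmn θ)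
  rw [Complex.re_sum] at h
  simp only [Complex.zero_re] at h
  rw [← h]
  exact Finset.sum_congr rfl fun u _ => (Complex.exp_ofReal_mul_I_re _).symm

private lemma sum_sin_aux (n m : ℕ) (hm1 : 0 < m) (hmn : m < n) (θ : ℝ) :
    ∑ u ∈ Finset.range n, Real.sin (2 * π * (m / n) * u + θ) = 0 := by
  have h := congrArg Complex.im (sum_exp_aux n m hm1 hmn θ)
  rw [Complex.im_sum] at h
  simp only [Complex.zero_im] at h
  rw [← h]
  exact Finset.sum_congr rfl fun u _ => (Complex.exp_ofReal_mul_I_im _).symm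

private lemma integral_unif (n : ℕ) (hn : 0 < n) (hne : (Finset.range n).Nonempty)
    (f : ℕ → ℝ) (hb : ∀ x, |f x| ≤ 1) :
    ∫ u, f u ∂((PMF.uniformOfFinset (Finset.range n) hne).toMeasure)
      = (n : ℝ)⁻¹ * ∑ u ∈ Finset.range n, f u := by
  set p := PMF.uniformOfFinset (Finset.range n) hne with hp
  have hmeas : Measurable f := measurable_of_countable f
  have hint : Integrable f p.toMeasure := by
    refine (integrable_const (1 : ℝ)).mono' hmeas.aestronglyMeasurable ?_
    exact ae_of_all _ fun x => by simpa [Real.norm_eq_abs] using hb x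
  rw [PMF.integral_eq_tsum p f hint]
  rw [tsum_eq_sum (s := Finset.range n) (fun a ha => by
    simp [hp, PMF.uniformOfFinset_apply, ha])]
  rw [Finset.mul_sum]
  refine Finset.sum_congr rfl fun a ha => ?_
  simp [hp, PMF.uniformOfFinset_apply, ha, smul_eq_mul]

/-- Let `U` be uniform on `{0, …, n-1}`, `f = 1/n` with `n ≥ 3`, `X = sin (2πfU + φ₁)` and
`Y = sin (2πfU + φ₂)`. If `φ₁ - φ₂` is not congruent to `π/2` modulo `π`, then `X` and `Y` are
correlated (nonzero covariance), and in particular not independent. -/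
theorem sin_sin_uniform_not_indep (n : ℕ) (hn : 3 ≤ n) (φ₁ φ₂ : ℝ)
    (hne : (Finset.range n).Nonempty)
    (hφ : ¬ ∃ k : ℤ, φ₁ - φ₂ = π / 2 + k * π) :
    (∫ u, Real.sin (2 * π * (1 / n) * u + φ₁) * Real.sin (2 * π * (1 / n) * u + φ₂)
        ∂((PMF.uniformOfFinset (Finset.range n) hne).toMeasure) -
      (∫ u, Real.sin (2 * π * (1 / n) * u + φ₁)
        ∂((PMF.uniformOfFinset (Finset.range n) hne).toMeasure)) *
      (∫ u, Real.sin (2 * π * (1 / n) * u + φ₂)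
        ∂((PMF.uniformOfFinset (Finset.range n) hne).toMeasure)) ≠ 0) ∧
    ¬ IndepFun (fun u : ℕ => Real.sin (2 * π * (1 / n) * u + φ₁))
        (fun u : ℕ => Real.sin (2 * π * (1 / n) * u + φ₂))
        ((PMF.uniformOfFinset (Finset.range n) hne).toMeasure) := by
  have hn0 : 0 < n := by omega
  have hn' : (n : ℝ) ≠ 0 := Nat.cast_ne_zero.mpr hn0.ne'
  -- the three integrals
  have hI1 : ∫ u, Real.sin (2 * π * (1 / n) * u + φ₁)
      ∂((PMF.uniformOfFinset (Finset.range n) hne).toMeasure) = 0 := by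
    rw [integral_unif n hn0 hne _ (fun x => Real.abs_sin_le_one _)]
    have := sum_sin_aux n 1 one_pos (by omega) φ₁
    simp only [Nat.cast_one] at this
    rw [this, mul_zero]
  have hI2 : ∫ u, Real.sin (2 * π * (1 / n) * u + φ₂)
      ∂((PMF.uniformOfFinset (Finset.range n) hne).toMeasure) = 0 := by
    rw [integral_unif n hn0 hne _ (fun x => Real.abs_sin_le_one _)]
    have := sum_sin_aux n 1 one_pos (by omega) φ₂
    simp only [Nat.cast_one] at this
    rw [this, mul_zero]
  have hIxy : ∫ u, Real.sin (2 * π * (1 / n) * u + φ₁) * Real.sin (2 * π * (1 / n) * u + φ₂)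
      ∂((PMF.uniformOfFinset (Finset.range n) hne).toMeasure)
      = Real.cos (φ₁ - φ₂) / 2 := by
    have hb : ∀ x : ℕ, |Real.sin (2 * π * (1 / n) * x + φ₁)
        * Real.sin (2 * π * (1 / n) * x + φ₂)| ≤ 1 := by
      intro x
      rw [abs_mul]
      calc |Real.sin _| * |Real.sin _| ≤ 1 * 1 :=
            mul_le_mul (Real.abs_sin_le_one _) (Real.abs_sin_le_one _) (abs_nonneg _) zero_le_one
        _ = 1 := one_mul 1
    rw [integral_unif n hn0 hne _ hb]
    have hterm : ∀ u ∈ Finset.range n,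
        Real.sin (2 * π * (1 / n) * u + φ₁) * Real.sin (2 * π * (1 / n) * u + φ₂)
          = Real.cos (φ₁ - φ₂) / 2 - Real.cos (2 * π * ((2:ℕ) / n) * u + (φ₁ + φ₂)) / 2 := by
      intro u _
      have key : ∀ a b : ℝ, Real.sin a * Real.sin b
          = Real.cos (a - b) / 2 - Real.cos (a + b) / 2 := by
        intro a b
        rw [Real.cos_sub, Real.cos_add]
        ring
      rw [key]
      have h1 : (2 * π * (1 / n) * u + φ₁) - (2 * π * (1 / n) * u + φ₂) = φ₁ - φ₂ := by ring
      have h2 : (2 * π * (1 / n) * u + φ₁) + (2 * π * (1 / n) * u + φ₂)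
          = 2 * π * ((2:ℕ) / n) * u + (φ₁ + φ₂) := by push_cast; ring
      rw [h1, h2]
    rw [Finset.sum_congr rfl hterm, Finset.sum_sub_distrib]
    rw [← Finset.sum_div, ← Finset.sum_div, sum_cos_aux n 2 two_pos (by omega) (φ₁ + φ₂)]
    simp only [Finset.sum_const, Finset.card_range, nsmul_eq_mul, zero_div, sub_zero]
    field_simp
  have hcos : Real.cos (φ₁ - φ₂) ≠ 0 := by
    intro h
    rw [Real.cos_eq_zero_iff] at h
    obtain ⟨k, hk⟩ := h
    exact hφ ⟨k, by rw [hk]; ring⟩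
  have hcov : ∫ u, Real.sin (2 * π * (1 / n) * u + φ₁) * Real.sin (2 * π * (1 / n) * u + φ₂)
        ∂((PMF.uniformOfFinset (Finset.range n) hne).toMeasure) -
      (∫ u, Real.sin (2 * π * (1 / n) * u + φ₁)
        ∂((PMF.uniformOfFinset (Finset.range n) hne).toMeasure)) *
      (∫ u, Real.sin (2 * π * (1 / n) * u + φ₂)
        ∂((PMF.uniformOfFinset (Finset.range n) hne).toMeasure)) ≠ 0 := by
    rw [hI1, hI2, hIxy]
    simp [hcos]
  refine ⟨hcov, fun hindep => ?_⟩
  have hm1 : AEStronglyMeasurable (fun u : ℕ => Real.sin (2 * π * (1 / n) * u + φ₁))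
      ((PMF.uniformOfFinset (Finset.range n) hne).toMeasure) :=
    (measurable_of_countable _).aestronglyMeasurable
  have hm2 : AEStronglyMeasurable (fun u : ℕ => Real.sin (2 * π * (1 / n) * u + φ₂))
      ((PMF.uniformOfFinset (Finset.range n) hne).toMeasure) :=
    (measurable_of_countable _).aestronglyMeasurable
  have := hindep.integral_fun_mul_eq_mul_integral hm1 hm2
  exact hcov (by rw [this]; ring)
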